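/- Let e : Fin n → X be an orthonormal basis of X and let v, w : Fin p → X be orthonormal families spanning subspaces V and W. Then |det( (⟪v i, w j⟫)_{i,j} )| ≤ ∑_{I ⊆ Fin n, |I| = p} |det( (⟪e k, v i⟫)_{k ∈ I, i} )| · |det( (⟪e k, w j⟫)_{k ∈ I, j} )|, where rows are indexed by the increasing enumeration of each p-element subset I. Equivalently, cosΘ_{V,W} ≤ ∑_I cosΘ_{V,X_I} · cosΘ_{W,X_I} over the coordinate p-subspaces X_I of the basis. -/

import Mathlib

open Equiv Equiv.Perm Finset Function Matrix

section CB
variable {R : Type*} [CommRing R] {p n : ℕ}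

local notation "ε " σ:arg => ((sign σ : ℤ) : R)

private theorem cb_aux {A : Matrix (Fin p) (Fin n) R} {B : Matrix (Fin n) (Fin p) R}
    {f : Fin p → Fin n} (H : ¬Injective f) :
    (∑ σ : Perm (Fin p), ε σ * ∏ x, A (σ x) (f x) * B (f x) x) = 0 := by
  obtain ⟨i, j, hpij, hij⟩ : ∃ i j, f i = f j ∧ i ≠ j := by
    rw [Injective] at H
    push_neg at H
    obtain ⟨i, j, h1, h2⟩ := H
    exact ⟨i, j, h1, h2⟩
  exact
    sum_involution (fun σ _ => σ * Equiv.swap i j)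
      (fun σ _ => by
        have : (∏ x, A (σ x) (f x)) = ∏ x, A ((σ * Equiv.swap i j) x) (f x) :=
          Fintype.prod_equiv (swap i j) _ _ (by simp [apply_swap_eq_self hpij])
        simp [this, sign_swap hij, -sign_swap', prod_mul_distrib])
      (fun σ _ _ => (not_congr mul_swap_eq_iff).mpr hij) (fun _ _ => mem_univ _) fun σ _ =>
      mul_swap_involutive i j σ

private theorem cb_image_g (I : Finset (Fin n)) (h : I.card = p) :
    Finset.image (fun k => (I.orderIsoOfFin h k : Fin n)) Finset.univ = I := by
  ext x
  simp only [mem_image, mem_univ, true_and]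
  constructor
  · rintro ⟨k, rfl⟩; exact (I.orderIsoOfFin h k).2
  · intro hx; exact ⟨(I.orderIsoOfFin h).symm ⟨x, hx⟩, by simp⟩

private theorem cb_image_comp_perm (g : Fin p → Fin n) (π : Perm (Fin p)) :
    Finset.image (fun k => g (π k)) Finset.univ = Finset.image g Finset.univ := by
  ext x; simp only [mem_image, mem_univ, true_and]
  exact ⟨fun ⟨k, hk⟩ => ⟨π k, hk⟩, fun ⟨k, hk⟩ => ⟨π⁻¹ k, by simpa using hk⟩⟩

private theorem cb_g_inj (I : Finset (Fin n)) (h : I.card = p) :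
    Injective (fun k => (I.orderIsoOfFin h k : Fin n)) :=
  fun a b hab => (I.orderIsoOfFin h).injective (Subtype.ext hab)

/-- Sum over injective functions as a sum over (subset, permutation) pairs. -/
private theorem cb_sum_inj {M : Type*} [AddCommMonoid M] (F : (Fin p → Fin n) → M) :
    ∑ f ∈ Finset.univ.filter (fun f : Fin p → Fin n => Injective f), F f
      = ∑ I ∈ (Finset.powersetCard p (Finset.univ : Finset (Fin n))).attach,
          ∑ π : Perm (Fin p),
            F (fun k => (I.1.orderIsoOfFin (Finset.mem_powersetCard_univ.mp I.2) (π k) : Fin n)) := by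
  rw [Finset.sum_sigma']
  refine (Finset.sum_bij
    (fun q _ => fun k =>
      (q.1.1.orderIsoOfFin (Finset.mem_powersetCard_univ.mp q.1.2) (q.2 k) : Fin n))
    ?_ ?_ ?_ ?_).symm
  · intro q _
    simp only [mem_filter, mem_univ, true_and]
    exact (cb_g_inj _ _).comp q.2.injective
  · intro a₁ _ a₂ _ hfe
    obtain ⟨I₁, π₁⟩ := a₁
    obtain ⟨I₂, π₂⟩ := a₂
    have hIeq : I₁ = I₂ := by
      apply Subtype.ext
      have h1 := cb_image_comp_perm
        (fun k => (I₁.1.orderIsoOfFin (Finset.mem_powersetCard_univ.mp I₁.2) k : Fin n)) π₁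
      have h2 := cb_image_comp_perm
        (fun k => (I₂.1.orderIsoOfFin (Finset.mem_powersetCard_univ.mp I₂.2) k : Fin n)) π₂
      have := congrArg (fun f => Finset.image f (Finset.univ : Finset (Fin p))) hfe
      simp only at this
      rw [h1, h2, cb_image_g, cb_image_g] at this
      exact this
    subst hIeq
    have hπ : π₁ = π₂ := by
      apply Equiv.coe_fn_injective
      funext k
      exact cb_g_inj I₁.1 (Finset.mem_powersetCard_univ.mp I₁.2) (congrFun hfe k)
    rw [hπ]
  · intro f hf
    have hinj : Injective f := by simpa using hf
    have hI : Finset.image f Finset.univ ∈ Finset.powersetCard p (Finset.univ : Finset (Fin n)) := by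
      rw [Finset.mem_powersetCard_univ, Finset.card_image_of_injective _ hinj, Finset.card_univ,
        Fintype.card_fin]
    set I : Finset (Fin n) := Finset.image f Finset.univ with hIdef
    have hcard : I.card = p := Finset.mem_powersetCard_univ.mp hI
    have hmem : ∀ k, f k ∈ I := fun k => Finset.mem_image_of_mem f (Finset.mem_univ k)
    have hbij : Bijective (fun k => (I.orderIsoOfFin hcard).symm ⟨f k, hmem k⟩) := by
      rw [← Finite.injective_iff_bijective]
      exact (I.orderIsoOfFin hcard).symm.injective.comp fun a b hab =>
        hinj (Subtype.mk.injEq .. ▸ hab)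
    refine ⟨⟨⟨I, hI⟩, Equiv.ofBijective _ hbij⟩, Finset.mem_sigma.mpr ⟨Finset.mem_attach _ _,
      Finset.mem_univ _⟩, ?_⟩
    funext k
    show ((I.orderIsoOfFin hcard) ((I.orderIsoOfFin hcard).symm ⟨f k, hmem k⟩) : Fin n) = f k
    rw [OrderIso.apply_symm_apply]
  · intro q _
    rfl

set_option maxHeartbeats 1000000 in
/-- **Cauchy–Binet formula**. -/
theorem cauchy_binet (A : Matrix (Fin p) (Fin n) R) (B : Matrix (Fin n) (Fin p) R) :
    (A * B).det = ∑ I ∈ (Finset.powersetCard p (Finset.univ : Finset (Fin n))).attach,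
      (A.submatrix id fun k =>
        (I.1.orderIsoOfFin (Finset.mem_powersetCard_univ.mp I.2) k : Fin n)).det *
      (B.submatrix (fun k =>
        (I.1.orderIsoOfFin (Finset.mem_powersetCard_univ.mp I.2) k : Fin n)) id).det := by
  have key : ∀ g : Fin p → Fin n,
      (∑ π : Perm (Fin p), ∑ σ : Perm (Fin p), ε σ * ∏ i, A (σ i) (g (π i)) * B (g (π i)) i)
        = (A.submatrix id g).det * (B.submatrix g id).det := by
    intro g
    calc (∑ π : Perm (Fin p), ∑ σ : Perm (Fin p), ε σ * ∏ i, A (σ i) (g (π i)) * B (g (π i)) i)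
        = ∑ π : Perm (Fin p), ∑ σ : Perm (Fin p),
            (∏ i, B (g (π i)) i) * ε σ * ∏ j, A (σ j) (g (π j)) := by
          simp only [mul_comm, mul_left_comm, prod_mul_distrib, mul_assoc]
      _ = ∑ π : Perm (Fin p), ∑ σ : Perm (Fin p),
            (∏ i, B (g (π i)) i) * (ε π * ε σ) * ∏ i, A (σ i) (g i) := by
          refine sum_congr rfl fun π _ => ?_
          refine Fintype.sum_equiv (Equiv.mulRight π⁻¹) _ _ fun σ => ?_
          simp only [Equiv.coe_mulRight]
          have h1 : (∏ x, A ((σ * π⁻¹) x) (g x)) = ∏ j, A (σ j) (g (π j)) := by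
            rw [← Equiv.prod_comp π (fun x => A ((σ * π⁻¹) x) (g x))]
            simp [Equiv.Perm.coe_mul]
          have hs : ((sign π : ℤ) : R) * ((sign π : ℤ) : R) = 1 := by
            rcases Int.units_eq_one_or (sign π) with h | h <;> rw [h] <;> norm_num
          have h2 : ((sign π : ℤ) : R) * ((sign (σ * π⁻¹) : ℤ) : R) = ε σ := by
            rw [Equiv.Perm.sign_mul, Equiv.Perm.sign_inv]
            push_cast
            linear_combination ((sign σ : ℤ) : R) * hs
          rw [h1, h2]
      _ = (A.submatrix id g).det * (B.submatrix g id).det := by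
          rw [det_apply', det_apply', Finset.sum_mul_sum, Finset.sum_comm]
          refine sum_congr rfl fun π _ => sum_congr rfl fun σ _ => ?_
          simp only [submatrix_apply, id_eq]
          ring
  calc (A * B).det
      = ∑ f : Fin p → Fin n, ∑ σ : Perm (Fin p), ε σ * ∏ i, A (σ i) (f i) * B (f i) i := by
        simp only [det_apply', Matrix.mul_apply, prod_univ_sum, mul_sum, Fintype.piFinset_univ]
        rw [Finset.sum_comm]
    _ = ∑ f ∈ Finset.univ.filter (fun f : Fin p → Fin n => Injective f),
          ∑ σ : Perm (Fin p), ε σ * ∏ i, A (σ i) (f i) * B (f i) i := by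
        refine (sum_subset (filter_subset _ _) fun f _ hbij => cb_aux ?_).symm
        simpa only [true_and, mem_filter, mem_univ] using hbij
    _ = _ := by
        refine (cb_sum_inj
          (fun f => ∑ σ : Perm (Fin p), ε σ * ∏ i, A (σ i) (f i) * B (f i) i)).trans ?_
        refine sum_congr rfl fun I _ => ?_
        exact key fun k => (I.1.orderIsoOfFin (Finset.mem_powersetCard_univ.mp I.2) k : Fin n)

end CB



variable {𝕜 X : Type*} [RCLike 𝕜] [NormedAddCommGroup X] [InnerProductSpace 𝕜 X]
  [FiniteDimensional 𝕜 X]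

/-- Let `e : Fin n → X` be an orthonormal basis of `X` and `v, w : Fin p → X`
orthonormal families spanning `V` and `W`.  Then
`|det (⟪v i, w j⟫)| ≤ ∑_{I, |I| = p} |det (⟪e k, v i⟫)_{k ∈ I, i}| * |det (⟪e k, w j⟫)_{k ∈ I, j}|`,
rows indexed by the increasing enumeration of each `p`-element subset `I`.
Equivalently, `cos Θ_{V,W} ≤ ∑_I cos Θ_{V,X_I} cos Θ_{W,X_I}`. -/
theorem grassmann_angle_coordinate_inequality {n p : ℕ} (e : Fin n → X)
    (he : Orthonormal 𝕜 e) (heX : Submodule.span 𝕜 (Set.range e) = ⊤)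
    (V W : Submodule 𝕜 X) (v w : Fin p → X)
    (hv : Orthonormal 𝕜 v) (hvV : Submodule.span 𝕜 (Set.range v) = V)
    (hw : Orthonormal 𝕜 w) (hwW : Submodule.span 𝕜 (Set.range w) = W) :
    ‖(Matrix.of fun i j : Fin p => (inner 𝕜 (v i) (w j) : 𝕜)).det‖ ≤
      ∑ I ∈ (Finset.powersetCard p (Finset.univ : Finset (Fin n))).attach,
        ‖(Matrix.of fun k i : Fin p =>
            (inner 𝕜 (e ((I.1.orderIsoOfFin (Finset.mem_powersetCard_univ.mp I.2) k : Fin n)))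
              (v i) : 𝕜)).det‖ *
          ‖(Matrix.of fun k j : Fin p =>
            (inner 𝕜 (e ((I.1.orderIsoOfFin (Finset.mem_powersetCard_univ.mp I.2) k : Fin n)))
              (w j) : 𝕜)).det‖ := by
  classical
  have b : OrthonormalBasis (Fin n) 𝕜 X := OrthonormalBasis.mk he heX.ge
  have hb : ⇑(OrthonormalBasis.mk he heX.ge) = e := OrthonormalBasis.coe_mk _ _
  set A : Matrix (Fin p) (Fin n) 𝕜 := Matrix.of fun i k => (inner 𝕜 (v i) (e k) : 𝕜) with hA
  set B : Matrix (Fin n) (Fin p) 𝕜 := Matrix.of fun k j => (inner 𝕜 (e k) (w j) : 𝕜) with hB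
  have hM : (Matrix.of fun i j : Fin p => (inner 𝕜 (v i) (w j) : 𝕜)) = A * B := by
    ext i j
    rw [Matrix.mul_apply]
    show (inner 𝕜 (v i) (w j) : 𝕜) = _
    rw [← (OrthonormalBasis.mk he heX.ge).sum_inner_mul_inner (v i) (w j)]
    simp [hA, hB, hb]
  rw [hM, cauchy_binet]
  refine (norm_sum_le _ _).trans (le_of_eq (Finset.sum_congr rfl fun I _ => ?_))
  rw [norm_mul]
  have hAI : A.submatrix id
        (fun k => (I.1.orderIsoOfFin (Finset.mem_powersetCard_univ.mp I.2) k : Fin n))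
        = (Matrix.of fun k i : Fin p =>
            (inner 𝕜 (e ((I.1.orderIsoOfFin (Finset.mem_powersetCard_univ.mp I.2) k : Fin n)))
              (v i) : 𝕜))ᴴ := by
    ext i k
    simp [hA, Matrix.conjTranspose_apply, inner_conj_symm]
  rw [hAI, Matrix.det_conjTranspose, norm_star]
  rfl
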